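/- Let S be a subset of R^2, let E be a convex subset of S, let s, t be points of S, and let s_e, t_e be points of E. Assume: (i) every path in S from s to t meets E; (ii) for every x in E, d_S(s,x) = d_S(s,s_e) + ||s_e - x||_1 and d_S(t,x) = d_S(t,t_e) + ||t_e - x||_1 (L1 norms coerced into extended nonnegative reals). Then d_S(s,t) = d_S(s,s_e) + ||s_e - t_e||_1 + d_S(t_e,t). -/

import Mathlib

open Set

noncomputable section

/-- A path in `S` from `p` to `q`: continuous on `[0,1]`, with the prescribed endpoints,
and staying in `S` on `[0,1]`. The plane carries the `L1` metric via `WithLp 1 (ℝ × ℝ)`. -/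
def IsPathIn (S : Set (WithLp 1 (ℝ × ℝ))) (p q : WithLp 1 (ℝ × ℝ))
    (g : ℝ → WithLp 1 (ℝ × ℝ)) : Prop :=
  ContinuousOn g (Icc 0 1) ∧ g 0 = p ∧ g 1 = q ∧ ∀ x ∈ Icc (0:ℝ) 1, g x ∈ S

/-- The intrinsic `L1` distance in `S`: the infimum of the `L1` lengths (total variations)
of all paths in `S` from `p` to `q` (infinity if there is no such path). -/
def dS (S : Set (WithLp 1 (ℝ × ℝ))) (p q : WithLp 1 (ℝ × ℝ)) : ENNReal :=
  ⨅ (g : ℝ → WithLp 1 (ℝ × ℝ)) (_ : IsPathIn S p q g), eVariationOn g (Icc 0 1)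

namespace DSAux

local notation "V" => WithLp 1 (ℝ × ℝ)

lemma dS_le {S : Set V} {p q : V} {g : ℝ → V} (hg : IsPathIn S p q g) :
    dS S p q ≤ eVariationOn g (Icc 0 1) :=
  iInf_le_of_le g (iInf_le _ hg)

lemma dS_symm_le (S : Set V) (p q : V) : dS S q p ≤ dS S p q := by
  refine le_iInf₂ fun g hg => ?_
  have hmaps : MapsTo (fun x : ℝ => 1 - x) (Icc 0 1) (Icc 0 1) := by
    intro x hx; simp only [mem_Icc] at hx ⊢; constructor <;> linarith
  have hpath : IsPathIn S q p (g ∘ fun x => 1 - x) := by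
    refine ⟨hg.1.comp (by fun_prop) hmaps, by simp [hg.2.2.1], by simp [hg.2.1],
      fun x hx => hg.2.2.2 _ (hmaps hx)⟩
  refine (dS_le hpath).trans ?_
  exact eVariationOn.comp_le_of_antitoneOn g _
    (fun a ha b hb hab => by linarith) hmaps

lemma dS_symm (S : Set V) (p q : V) : dS S p q = dS S q p :=
  le_antisymm (dS_symm_le S q p) (dS_symm_le S p q)

lemma subpath_left {S : Set V} {p q : V} {g : ℝ → V} (hg : IsPathIn S p q g)
    {c : ℝ} (hc : c ∈ Icc (0:ℝ) 1) :
    dS S p (g c) ≤ eVariationOn g (Icc 0 c) := by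
  have hmaps : MapsTo (fun x : ℝ => c * x) (Icc 0 1) (Icc 0 c) := by
    intro x hx
    simp only [mem_Icc] at hx ⊢
    constructor
    · exact mul_nonneg hc.1 hx.1
    · nlinarith [hc.1, hx.2, hx.1]
  have hsub : Icc 0 c ⊆ Icc (0:ℝ) 1 := Icc_subset_Icc le_rfl hc.2
  have hpath : IsPathIn S p (g c) (g ∘ fun x => c * x) := by
    refine ⟨(hg.1.mono hsub).comp (by fun_prop) hmaps, by simp [hg.2.1], by simp,
      fun x hx => hg.2.2.2 _ (hsub (hmaps hx))⟩
  refine (dS_le hpath).trans ?_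
  exact eVariationOn.comp_le_of_monotoneOn g _
    (fun a ha b hb hab => by nlinarith [hc.1]) hmaps

lemma subpath_right {S : Set V} {p q : V} {g : ℝ → V} (hg : IsPathIn S p q g)
    {c : ℝ} (hc : c ∈ Icc (0:ℝ) 1) :
    dS S (g c) q ≤ eVariationOn g (Icc c 1) := by
  have hmaps : MapsTo (fun x : ℝ => c + (1 - c) * x) (Icc 0 1) (Icc c 1) := by
    intro x hx
    simp only [mem_Icc] at hx ⊢
    constructor
    · nlinarith [hc.2, hx.1]
    · nlinarith [hc.2, hx.2, hx.1]
  have hsub : Icc c 1 ⊆ Icc (0:ℝ) 1 := Icc_subset_Icc hc.1 le_rfl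
  have hpath : IsPathIn S (g c) q (g ∘ fun x => c + (1 - c) * x) := by
    refine ⟨(hg.1.mono hsub).comp (by fun_prop) hmaps, by simp, by simp [hg.2.2.1],
      fun x hx => hg.2.2.2 _ (hsub (hmaps hx))⟩
  refine (dS_le hpath).trans ?_
  exact eVariationOn.comp_le_of_monotoneOn g _
    (fun a ha b hb hab => by nlinarith [hc.2]) hmaps

lemma glue_closed {f : ℝ → V} {A B : Set ℝ} (hA : IsClosed A) (hB : IsClosed B)
    (hfA : ContinuousOn f A) (hfB : ContinuousOn f B) : ContinuousOn f (A ∪ B) := by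
  intro x hx
  apply ContinuousWithinAt.union
  · by_cases h : x ∈ A
    · exact hfA x h
    · exact continuousWithinAt_of_notMem_closure (by rwa [hA.closure_eq])
  · by_cases h : x ∈ B
    · exact hfB x h
    · exact continuousWithinAt_of_notMem_closure (by rwa [hB.closure_eq])

lemma dS_triangle (S : Set V) (p q r : V) :
    dS S p r ≤ dS S p q + dS S q r := by
  have key : ∀ g1 : ℝ → V, IsPathIn S p q g1 → ∀ g2 : ℝ → V, IsPathIn S q r g2 →
      dS S p r ≤ eVariationOn g1 (Icc 0 1) + eVariationOn g2 (Icc 0 1) := by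
    intro g1 hg1 g2 hg2
    set h : ℝ → V := fun x => if x ≤ 1/2 then g1 (2*x) else g2 (2*x - 1) with hh
    have hmaps1 : MapsTo (fun x : ℝ => 2*x) (Icc 0 (1/2 : ℝ)) (Icc 0 1) := by
      intro x hx; simp only [mem_Icc] at hx ⊢; constructor <;> linarith
    have hmaps2 : MapsTo (fun x : ℝ => 2*x - 1) (Icc (1/2 : ℝ) 1) (Icc 0 1) := by
      intro x hx; simp only [mem_Icc] at hx ⊢; constructor <;> linarith
    have heq1 : EqOn h (g1 ∘ fun x => 2*x) (Icc 0 (1/2 : ℝ)) := by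
      intro x hx; simp only [hh, Function.comp]; rw [if_pos hx.2]
    have heq2 : EqOn h (g2 ∘ fun x => 2*x - 1) (Icc (1/2 : ℝ) 1) := by
      intro x hx
      simp only [hh, Function.comp]
      by_cases hx2 : x ≤ 1/2
      · have : x = 1/2 := le_antisymm hx2 hx.1
        subst this
        rw [if_pos le_rfl]
        norm_num [hg1.2.2.1, hg2.2.1]
      · rw [if_neg hx2]
    have hc1 : ContinuousOn h (Icc 0 (1/2 : ℝ)) :=
      (hg1.1.comp (by fun_prop) hmaps1).congr heq1
    have hc2 : ContinuousOn h (Icc (1/2 : ℝ) 1) :=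
      (hg2.1.comp (by fun_prop) hmaps2).congr heq2
    have hunion : Icc (0:ℝ) 1 = Icc 0 (1/2 : ℝ) ∪ Icc (1/2 : ℝ) 1 :=
      (Icc_union_Icc_eq_Icc (by norm_num) (by norm_num)).symm
    have hpath : IsPathIn S p r h := by
      refine ⟨?_, ?_, ?_, ?_⟩
      · rw [hunion]; exact glue_closed isClosed_Icc isClosed_Icc hc1 hc2
      · simp only [hh]; norm_num [hg1.2.1]
      · simp only [hh]; norm_num [hg2.2.2.1]
      · intro x hx
        rw [hunion] at hx
        rcases hx with hx | hx
        · rw [heq1 hx]; exact hg1.2.2.2 _ (hmaps1 hx)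
        · rw [heq2 hx]; exact hg2.2.2.2 _ (hmaps2 hx)
    refine (dS_le hpath).trans ?_
    have hsplit := eVariationOn.Icc_add_Icc h (s := Icc (0:ℝ) 1)
      (a := 0) (b := 1/2) (c := 1) (by norm_num) (by norm_num) (by norm_num)
    have e1 : Icc (0:ℝ) 1 ∩ Icc 0 (1/2) = Icc 0 (1/2 : ℝ) := by
      rw [Icc_inter_Icc]; norm_num
    have e2 : Icc (0:ℝ) 1 ∩ Icc (1/2) 1 = Icc (1/2 : ℝ) 1 := by
      rw [Icc_inter_Icc]; norm_num
    have e3 : Icc (0:ℝ) 1 ∩ Icc 0 1 = Icc (0:ℝ) 1 := inter_self _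
    rw [e1, e2, e3] at hsplit
    rw [← hsplit]
    gcongr
    · rw [eVariationOn.eq_of_eqOn heq1]
      exact eVariationOn.comp_le_of_monotoneOn g1 _
        (fun a ha b hb hab => by linarith) hmaps1
    · rw [eVariationOn.eq_of_eqOn heq2]
      exact eVariationOn.comp_le_of_monotoneOn g2 _
        (fun a ha b hb hab => by linarith) hmaps2
  rcases eq_or_ne (dS S p q) ⊤ with htop | htop
  · rw [htop]; simp
  rcases eq_or_ne (dS S q r) ⊤ with htop2 | htop2
  · rw [htop2]; simp
  refine ENNReal.le_of_forall_pos_le_add fun ε hε hlt => ?_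
  have hε2 : (0:ENNReal) < ε / 2 := by
    simp [ENNReal.div_pos_iff, hε.ne']
  have h1 : dS S p q < dS S p q + ε / 2 :=
    ENNReal.lt_add_right htop (by simp [hε.ne'])
  have h2 : dS S q r < dS S q r + ε / 2 :=
    ENNReal.lt_add_right htop2 (by simp [hε.ne'])
  rw [dS, iInf_lt_iff] at h1 h2
  obtain ⟨g1, hg1⟩ := h1
  obtain ⟨g2, hg2⟩ := h2
  rw [iInf_lt_iff] at hg1 hg2
  obtain ⟨hg1p, hg1v⟩ := hg1
  obtain ⟨hg2p, hg2v⟩ := hg2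
  calc dS S p r ≤ eVariationOn g1 (Icc 0 1) + eVariationOn g2 (Icc 0 1) := key _ hg1p _ hg2p
    _ ≤ (dS S p q + ε / 2) + (dS S q r + ε / 2) := add_le_add hg1v.le hg2v.le
    _ = dS S p q + dS S q r + (ε / 2 + ε / 2) := by ring
    _ = dS S p q + dS S q r + ε := by rw [ENNReal.add_halves]

lemma dS_le_of_segment {S : Set V} {p q : V} (hseg : segment ℝ p q ⊆ S) :
    dS S p q ≤ (‖p - q‖₊ : ENNReal) := by
  set g : ℝ → V := fun x => p + x • (q - p) with hg
  have hlip : LipschitzWith ‖q - p‖₊ g := by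
    intro a b
    have : g a - g b = (a - b) • (q - p) := by
      simp only [hg]; rw [sub_smul]; abel
    rw [edist_nndist, nndist_eq_nnnorm, this, nnnorm_smul, edist_nndist, nndist_eq_nnnorm]
    push_cast
    rw [mul_comm]
  have hpath : IsPathIn S p q g := by
    refine ⟨hlip.continuous.continuousOn, by simp [hg], by simp [hg], fun x hx => ?_⟩
    apply hseg
    refine ⟨1 - x, x, by linarith [hx.2], hx.1, by ring, ?_⟩
    simp only [hg]
    rw [smul_sub, sub_smul, one_smul]
    abel
  refine (dS_le hpath).trans ?_
  have h1 : eVariationOn (g ∘ id) (Icc (0:ℝ) 1) ≤ ‖q - p‖₊ * eVariationOn id (Icc (0:ℝ) 1) :=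
    LipschitzOnWith.comp_eVariationOn_le (fun x _ y _ => hlip x y) (mapsTo_univ _ _)
  rw [Function.comp_id] at h1
  have h2 : eVariationOn (id : ℝ → ℝ) (Icc (0:ℝ) 1) ≤ 1 := by
    have := MonotoneOn.eVariationOn_le (f := (id : ℝ → ℝ)) (s := Icc (0:ℝ) 1)
      (fun a _ b _ hab => hab) (a := 0) (b := 1) (by norm_num) (by norm_num)
    rw [inter_self] at this
    simpa using this
    
  calc eVariationOn g (Icc (0:ℝ) 1) ≤ ‖q - p‖₊ * eVariationOn id (Icc (0:ℝ) 1) := h1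
    _ ≤ ‖q - p‖₊ * 1 := by gcongr
    _ = (‖q - p‖₊ : ENNReal) := mul_one _
    _ = (‖p - q‖₊ : ENNReal) := by rw [← neg_sub q p, nnnorm_neg]

end DSAux

open DSAux

theorem dS_separated_by_segment (S : Set (WithLp 1 (ℝ × ℝ)))
    (E : Set (WithLp 1 (ℝ × ℝ))) (hES : E ⊆ S) (hEconv : Convex ℝ E)
    (s t : WithLp 1 (ℝ × ℝ)) (hs : s ∈ S) (ht : t ∈ S)
    (se te : WithLp 1 (ℝ × ℝ)) (hse : se ∈ E) (hte : te ∈ E)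
    (hsep : ∀ g : ℝ → WithLp 1 (ℝ × ℝ), IsPathIn S s t g → ∃ c ∈ Icc (0:ℝ) 1, g c ∈ E)
    (hprojs : ∀ x ∈ E, dS S s x = dS S s se + (‖se - x‖₊ : ENNReal))
    (hprojt : ∀ x ∈ E, dS S t x = dS S t te + (‖te - x‖₊ : ENNReal)) :
    dS S s t = dS S s se + (‖se - te‖₊ : ENNReal) + dS S te t := by
  apply le_antisymm
  · calc dS S s t ≤ dS S s se + dS S se t := dS_triangle S s se t
      _ ≤ dS S s se + (dS S se te + dS S te t) := by gcongr; exact dS_triangle S se te t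
      _ ≤ dS S s se + ((‖se - te‖₊ : ENNReal) + dS S te t) := by
          gcongr
          exact dS_le_of_segment ((hEconv.segment_subset hse hte).trans hES)
      _ = dS S s se + (‖se - te‖₊ : ENNReal) + dS S te t := by rw [add_assoc]
  · refine le_iInf₂ fun g hg => ?_
    obtain ⟨c, hc, hcE⟩ := hsep g hg
    have hsplit := eVariationOn.Icc_add_Icc g (s := Icc (0:ℝ) 1)
      (a := 0) (b := c) (c := 1) hc.1 hc.2 hc
    have e1 : Icc (0:ℝ) 1 ∩ Icc 0 c = Icc 0 c := by
      rw [Icc_inter_Icc]; congr 1 <;> simp [hc.1, hc.2]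
    have e2 : Icc (0:ℝ) 1 ∩ Icc c 1 = Icc c 1 := by
      rw [Icc_inter_Icc]; congr 1 <;> simp [hc.1, hc.2]
    have e3 : Icc (0:ℝ) 1 ∩ Icc 0 1 = Icc (0:ℝ) 1 := inter_self _
    rw [e1, e2, e3] at hsplit
    have hL : dS S s (g c) ≤ eVariationOn g (Icc 0 c) := subpath_left hg hc
    have hR : dS S (g c) t ≤ eVariationOn g (Icc c 1) := subpath_right hg hc
    have hds : dS S s (g c) = dS S s se + (‖se - g c‖₊ : ENNReal) := hprojs _ hcE
    have hdt : dS S (g c) t = dS S te t + (‖te - g c‖₊ : ENNReal) := by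
      rw [dS_symm S (g c) t, hprojt _ hcE, dS_symm S t te]
    have htri : (‖se - te‖₊ : ENNReal) ≤ (‖se - g c‖₊ : ENNReal) + (‖te - g c‖₊ : ENNReal) := by
      have : ‖se - te‖₊ ≤ ‖se - g c‖₊ + ‖te - g c‖₊ := by
        calc ‖se - te‖₊ = ‖(se - g c) - (te - g c)‖₊ := by congr 1; abel
          _ ≤ ‖se - g c‖₊ + ‖te - g c‖₊ := nnnorm_sub_le _ _
      exact_mod_cast this
    calc dS S s se + (‖se - te‖₊ : ENNReal) + dS S te t
        ≤ dS S s se + ((‖se - g c‖₊ : ENNReal) + (‖te - g c‖₊ : ENNReal)) + dS S te t := by gcongr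
      _ = (dS S s se + (‖se - g c‖₊ : ENNReal)) + (dS S te t + (‖te - g c‖₊ : ENNReal)) := by ring
      _ = dS S s (g c) + dS S (g c) t := by rw [hds, hdt]
      _ ≤ eVariationOn g (Icc 0 c) + eVariationOn g (Icc c 1) := add_le_add hL hR
      _ = eVariationOn g (Icc 0 1) := hsplit
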